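/- An integral domain R is a discrete valuation ring if and only if R has a unique maximal ideal, this maximal ideal is nonzero, and for all ideals I, J of R with J ⊆ I there exists an ideal I' of R with I · I' = J (i.e., to contain is to divide). -/

import Mathlib

open IsLocalRing FractionalIdeal nonZeroDivisors

theorem stmt3 (R : Type*) [CommRing R] [IsDomain R] :
    IsDiscreteValuationRing R ↔
      (∃ M : Ideal R, M.IsMaximal ∧ M ≠ ⊥ ∧ ∀ M' : Ideal R, M'.IsMaximal → M' = M) ∧
      (∀ I J : Ideal R, J ≤ I → ∃ I' : Ideal R, I * I' = J) := by
  constructor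
  · intro h
    haveI : IsDedekindDomain R := inferInstance
    refine ⟨⟨maximalIdeal R, inferInstance, IsDiscreteValuationRing.not_a_field R,
      fun M' hM' => IsLocalRing.eq_maximalIdeal hM'⟩, fun I J hJI => ?_⟩
    obtain ⟨I', hI'⟩ := Ideal.dvd_iff_le.mpr hJI
    exact ⟨I', hI'.symm⟩
  · rintro ⟨⟨M, hM, hMne, hMuniq⟩, hdvd⟩
    haveI : IsLocalRing R := IsLocalRing.of_unique_max_ideal ⟨M, hM, hMuniq⟩
    have hMmax : M = maximalIdeal R := IsLocalRing.eq_maximalIdeal hM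
    have hfield : ¬ IsField R := by
      rw [IsLocalRing.isField_iff_maximalIdeal_eq, ← hMmax]
      exact hMne
    -- every nonzero integral ideal is invertible
    have key : ∀ J : Ideal R, J ≠ ⊥ →
        IsUnit (J : FractionalIdeal R⁰ (FractionRing R)) := by
      intro J hJ
      obtain ⟨x, hxJ, hx0⟩ := Submodule.exists_mem_ne_zero_of_ne_bot hJ
      obtain ⟨J', hJ'⟩ := hdvd J (Ideal.span {x})
        ((Ideal.span_singleton_le_iff_mem J).mpr hxJ)
      have : (J : FractionalIdeal R⁰ (FractionRing R)) * J' =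
          spanSingleton R⁰ (algebraMap R (FractionRing R) x) := by
        rw [← coeIdeal_mul, hJ', coeIdeal_span_singleton]
      have hu : IsUnit (spanSingleton R⁰ (algebraMap R (FractionRing R) x)) := by
        refine IsUnit.of_mul_eq_one (spanSingleton R⁰ (algebraMap R (FractionRing R) x)⁻¹) ?_
        rw [spanSingleton_mul_spanSingleton, mul_inv_cancel₀, spanSingleton_one]
        simpa using hx0
      exact isUnit_of_mul_isUnit_left (this ▸ hu)
    haveI : IsDedekindDomain R := by
      refine (isDedekindDomain_iff_mul_inv_cancel (K := FractionRing R)).mpr (fun I hI => ?_)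
      obtain ⟨a, J, haJ, rfl⟩ := exists_eq_spanSingleton_mul I
      have hJ : J ≠ ⊥ := by
        rintro rfl
        simp at hI
      have ha : (algebraMap R (FractionRing R) a) ≠ 0 := by
        simpa using haJ
      have hu : IsUnit (spanSingleton R⁰ (algebraMap R (FractionRing R) a)⁻¹) := by
        refine IsUnit.of_mul_eq_one (spanSingleton R⁰ (algebraMap R (FractionRing R) a)) ?_
        rw [spanSingleton_mul_spanSingleton, inv_mul_cancel₀ ha, spanSingleton_one]
      exact (mul_inv_cancel_iff_isUnit (K := FractionRing R)).mpr (hu.mul (key J hJ))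
    exact ((IsDiscreteValuationRing.TFAE (R := R) hfield).out 0 2).mpr ‹IsDedekindDomain R›
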